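/- arXiv:2006.16939 — 5 statements merged into one kernel-verified Lean document; each statement's English description precedes it below -/
import Mathlib

section
/- With the setup of the compensation function s(x,v), for every price vector p ∈ ℝ^I and every utility level v, the Hicksian demand set {x* : ∃ m*, (m*,x*) minimizes m + p·x over (m,x) ∈ (m₀,∞) × X with u(m,x) ≥ v} equals argmin_{x ∈ X} (s(x,v) + p·x), which equals argmax_{x ∈ X} (V(x,v) - p·x) where V(x,v) := -s(x,v). -/
open Filter Set

/-- Money-extended price of a bundle: `p · x` with money price 1 handled separately. -/
noncomputable def dotp {I : Type*} [Fintype I] (p : I → ℝ) (x : I → ℤ) : ℝ :=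
  ∑ i, p i * (x i : ℝ)

/-- the Hicksian demand set (goods bundles appearing in
expenditure-minimizing consumption bundles achieving utility at least `v`)
equals `argmin_{x ∈ X} (s(x,v) + p·x)`, which equals
`argmax_{x ∈ X} (V(x,v) - p·x)` where `V(x,v) = -s(x,v)`. -/
theorem hicksian_demand_eq_argmax_hicksian_valuation {I : Type*} [Fintype I]
    (X : Finset (I → ℤ)) (m₀ : ℝ) (u : ℝ → (I → ℤ) → ℝ)
    (hcont : ∀ x ∈ X, ContinuousOn (fun m => u m x) (Set.Ioi m₀))
    (hmono : ∀ x ∈ X, StrictMonoOn (fun m => u m x) (Set.Ioi m₀))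
    (hbot : ∀ x ∈ X, Tendsto (fun m => u m x) (nhdsWithin m₀ (Set.Ioi m₀)) atBot)
    (htop : ∀ x ∈ X, Tendsto (fun m => u m x) atTop atTop)
    (s : (I → ℤ) → ℝ → ℝ)
    (hs : ∀ x ∈ X, ∀ v : ℝ, s x v > m₀ ∧ u (s x v) x = v)
    (p : I → ℝ) (v : ℝ) :
    {x : I → ℤ | x ∈ X ∧ ∃ m > m₀, u m x ≥ v ∧
        ∀ m' > m₀, ∀ y ∈ X, u m' y ≥ v → m + dotp p x ≤ m' + dotp p y}
      = {x : I → ℤ | x ∈ X ∧ ∀ y ∈ X, s x v + dotp p x ≤ s y v + dotp p y} ∧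
    {x : I → ℤ | x ∈ X ∧ ∀ y ∈ X, s x v + dotp p x ≤ s y v + dotp p y}
      = {x : I → ℤ | x ∈ X ∧ ∀ y ∈ X,
          (-(s y v)) - dotp p y ≤ (-(s x v)) - dotp p x} := by
  constructor
  · ext x
    simp only [Set.mem_setOf_eq]
    constructor
    · rintro ⟨hx, m, hm, hum, hmin⟩
      -- m ≥ s x v
      have hge : s x v ≤ m := by
        by_contra h
        push_neg at h
        have := (hmono x hx) hm (lt_trans hm h) h
        simp only at this
        rw [(hs x hx v).2] at this
        exact absurd hum (not_le.mpr this)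
      have hle : m ≤ s x v := by
        have := hmin (s x v) (hs x hx v).1 x hx (ge_of_eq (hs x hx v).2)
        linarith
      have hm_eq : m = s x v := le_antisymm hle hge
      refine ⟨hx, fun y hy => ?_⟩
      have := hmin (s y v) (hs y hy v).1 y hy (ge_of_eq (hs y hy v).2)
      linarith
    · rintro ⟨hx, hmin⟩
      refine ⟨hx, s x v, (hs x hx v).1, ge_of_eq (hs x hx v).2, ?_⟩
      intro m' hm' y hy huy
      have hge : s y v ≤ m' := by
        by_contra h
        push_neg at h
        have := (hmono y hy) hm' (lt_trans hm' h) h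
        simp only at this
        rw [(hs y hy v).2] at this
        exact absurd huy (not_le.mpr this)
      have := hmin y hy
      linarith
  · ext x
    simp only [Set.mem_setOf_eq]
    constructor
    · rintro ⟨hx, h⟩
      exact ⟨hx, fun y hy => by have := h y hy; linarith⟩
    · rintro ⟨hx, h⟩
      exact ⟨hx, fun y hy => by have := h y hy; linarith⟩
end

section
/- Let X ⊆ ℤ^I be finite and let F : X × ℝ → (-∞, -m₀) be a function. There exists a utility function u : (m₀,∞) × X → ℝ, continuous and strictly increasing in money and satisfying the limit conditions (u → -∞ as m → m₀⁺, u → ∞ as m → ∞), whose Hicksian valuation at each utility level v is F(·,v), if and only if, for each x ∈ X, the function v ↦ F(x,v) is continuous, strictly decreasing, tends to -m₀ as v → -∞, and tends to -∞ as v → ∞. -/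
open Filter Set

/-- Fact 2, Duality for Preferences: a function `F : X × ℝ → (-∞,-m₀)`
is the family of Hicksian valuations of some utility function (continuous and strictly
increasing in money with the standard limit conditions, and with compensation function
`s(x,v) = -F(x,v)`) if and only if each `F(x,·)` is continuous, strictly decreasing,
tends to `-m₀` at `-∞` and to `-∞` at `∞`. -/
theorem duality_for_preferences {I : Type*} [Fintype I]
    (X : Finset (I → ℤ)) (m₀ : ℝ)
    (F : (I → ℤ) → ℝ → ℝ) (hF : ∀ x ∈ X, ∀ v : ℝ, F x v < -m₀) :
    (∃ u : ℝ → (I → ℤ) → ℝ,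
        (∀ x ∈ X, ContinuousOn (fun m => u m x) (Set.Ioi m₀)) ∧
        (∀ x ∈ X, StrictMonoOn (fun m => u m x) (Set.Ioi m₀)) ∧
        (∀ x ∈ X, Tendsto (fun m => u m x) (nhdsWithin m₀ (Set.Ioi m₀)) atBot) ∧
        (∀ x ∈ X, Tendsto (fun m => u m x) atTop atTop) ∧
        (∀ x ∈ X, ∀ v : ℝ, u (-(F x v)) x = v))
    ↔ (∀ x ∈ X, Continuous (F x) ∧ StrictAnti (F x) ∧
        Tendsto (F x) atBot (nhds (-m₀)) ∧ Tendsto (F x) atTop atBot) := by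
  constructor
  · rintro ⟨u, hcont, hmono, hbot, htop, hval⟩ x hx
    have hlt : ∀ v, F x v < -m₀ := hF x hx
    have hmem : ∀ v, -F x v ∈ Ioi m₀ := fun v => by
      simpa [Set.mem_Ioi] using neg_lt_neg (hlt v)
    have hum := hmono x hx
    -- strict antitonicity
    have hanti : StrictAnti (F x) := by
      intro v v' hvv'
      by_contra h
      push_neg at h
      have : v' ≤ v := by
        have := hum.monotoneOn (hmem v') (hmem v) (by linarith)
        simpa [hval x hx v, hval x hx v'] using this
      linarith
    -- surjectivity onto Iio (-m₀)
    have hsurj : ∀ y < -m₀, ∃ v, F x v = y := by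
      intro y hy
      refine ⟨u (-y) x, ?_⟩
      have h1 : -y ∈ Ioi m₀ := by simpa [Set.mem_Ioi] using neg_lt_neg hy
      have h2 : u (-(F x (u (-y) x))) x = u (-y) x := hval x hx _
      have := hum.injOn (hmem _) h1 h2
      linarith [this]
    refine ⟨?_, hanti, ?_, ?_⟩
    · -- continuity
      have hsm : StrictMonoOn (fun v => -(F x v)) Set.univ := fun a _ b _ hab => by
        simpa using neg_lt_neg (hanti hab)
      have hcontneg : Continuous fun v => -(F x v) := by
        rw [continuous_iff_continuousAt]
        intro a
        refine StrictMonoOn.continuousAt_of_image_mem_nhds hsm (univ_mem) ?_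
        have : Ioi m₀ ⊆ (fun v => -(F x v)) '' Set.univ := by
          intro y hy
          obtain ⟨v, hv⟩ := hsurj (-y) (by simpa [Set.mem_Ioi] using neg_lt_neg (Set.mem_Ioi.mp hy))
          exact ⟨v, trivial, by simp [hv]⟩
        exact mem_of_superset (isOpen_Ioi.mem_nhds (hmem a)) this
      have : Continuous fun v => -(-(F x v)) := hcontneg.neg
      simpa using this
    · -- tendsto atBot (nhds (-m₀))
      rw [tendsto_order]
      constructor
      · intro l hl
        obtain ⟨l', hl1, hl2⟩ := exists_between hl
        obtain ⟨v₀, hv₀⟩ := hsurj l' hl2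
        filter_upwards [eventually_le_atBot v₀] with v hv
        calc l < l' := hl1
          _ = F x v₀ := hv₀.symm
          _ ≤ F x v := hanti.antitone hv
      · intro b hb
        filter_upwards with v using (hlt v).trans hb
    · -- tendsto atTop atBot
      rw [tendsto_atBot]
      intro b
      obtain ⟨v₀, hv₀⟩ := hsurj (min b (-m₀ - 1)) (by
        have := min_le_right b (-m₀ - 1); linarith)
      filter_upwards [eventually_ge_atTop v₀] with v hv
      calc F x v ≤ F x v₀ := hanti.antitone hv
        _ = min b (-m₀ - 1) := hv₀
        _ ≤ b := min_le_left _ _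
  · intro h
    classical
    refine ⟨fun m x => if x ∈ X then Function.invFun (F x) (-m) else m, ?_, ?_, ?_, ?_, ?_⟩ <;>
      intro x hx
    all_goals
      obtain ⟨hc, ha, hb, ht⟩ := h x hx
      have hinj : Function.Injective (F x) := ha.injective
      have hleft : ∀ v, Function.invFun (F x) (F x v) = v :=
        fun v => Function.leftInverse_invFun hinj v
      have hsurj : ∀ y < -m₀, ∃ v, F x v = y := by
        intro y hy
        obtain ⟨a, hay⟩ : ∃ a, y < F x a := by
          have : ∀ᶠ v in atBot, F x v ∈ Ioi y := hb (Ioi_mem_nhds (by linarith))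
          obtain ⟨a, haa⟩ := this.exists
          exact ⟨a, haa⟩
        obtain ⟨b, hby⟩ : ∃ b, F x b < y := (ht.eventually (eventually_lt_atBot y)).exists
        have hab : a ≤ b := by
          by_contra hba
          push_neg at hba
          exact absurd (ha hba) (by linarith)
        obtain ⟨v, _, hv⟩ := intermediate_value_Icc' hab hc.continuousOn
          ⟨hby.le, hay.le⟩
        exact ⟨v, hv⟩
      have hright : ∀ y < -m₀, F x (Function.invFun (F x) y) = y := by
        intro y hy
        exact Function.invFun_eq (hsurj y hy)
      have hgF : ∀ m ∈ Ioi m₀, F x (Function.invFun (F x) (-m)) = -m := by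
        intro m hm
        exact hright (-m) (by simpa [Set.mem_Ioi] using neg_lt_neg (Set.mem_Ioi.mp hm))
      have hgmono : StrictMonoOn (fun m => Function.invFun (F x) (-m)) (Ioi m₀) := by
        intro m hm m' hm' hmm'
        have h1 := hgF m hm
        have h2 := hgF m' hm'
        have : F x (Function.invFun (F x) (-m')) < F x (Function.invFun (F x) (-m)) := by
          rw [h1, h2]; linarith
        exact (ha.lt_iff_gt).mp this
      have hgsurj : ∀ v, Function.invFun (F x) (-(-(F x v))) = v := by
        intro v
        rw [neg_neg]; exact hleft v
      have hFmem : ∀ v, -F x v ∈ Ioi m₀ := fun v => by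
        simpa [Set.mem_Ioi] using neg_lt_neg (hF x hx v)
      simp only [if_pos hx]
    · -- continuity
      intro a haa
      refine ContinuousAt.continuousWithinAt ?_
      refine StrictMonoOn.continuousAt_of_image_mem_nhds hgmono
        (isOpen_Ioi.mem_nhds haa) ?_
      have : (fun m => Function.invFun (F x) (-m)) '' Ioi m₀ = Set.univ := by
        apply Set.eq_univ_of_forall
        intro v
        exact ⟨-(F x v), hFmem v, hgsurj v⟩
      rw [this]
      exact univ_mem
    · exact hgmono
    · rw [tendsto_atBot]
      intro v
      have hmem : Ioo m₀ (-(F x v)) ∈ nhdsWithin m₀ (Ioi m₀) :=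
        Ioo_mem_nhdsGT_of_mem ⟨le_refl _, hFmem v⟩
      filter_upwards [hmem] with m hm
      have : Function.invFun (F x) (-m) < Function.invFun (F x) (-(-(F x v))) :=
        hgmono hm.1 (hFmem v) hm.2
      rw [hgsurj v] at this
      exact this.le
    · rw [tendsto_atTop]
      intro v
      filter_upwards [eventually_ge_atTop (max (-(F x v)) (m₀ + 1))] with m hm
      have hm1 : m ∈ Ioi m₀ := by
        have := le_max_right (-(F x v)) (m₀ + 1)
        simp only [Set.mem_Ioi]; linarith [le_trans this hm]
      have : Function.invFun (F x) (-(-(F x v))) ≤ Function.invFun (F x) (-m) :=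
        hgmono.monotoneOn (hFmem v) hm1 (le_trans (le_max_left _ _) hm)
      rw [hgsurj v] at this
      exact this
    · intro v
      exact hgsurj v
end

section
/- Let V : X → ℝ be a valuation on a finite set X ⊆ ℤ^I with demand D(p) = argmax_{x∈X}(V(x) - p·x). Then V is concave in the discrete sense (for each integer point z in the convex hull of X there is a price p with z ∈ D(p)) if and only if for every price vector p, conv(D(p)) ∩ ℤ^I = D(p). -/
open Finset RealInnerProductSpace

/-- Embedding of integer bundles into `ℝ^I`. -/
noncomputable def coeZR {I : Type*} (x : I → ℤ) : I → ℝ := fun i => (x i : ℝ)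

namespace ConcaveAux

variable {I : Type*} [Fintype I]

local notation "E" => EuclideanSpace ℝ I

/-- linear functional given by dot product with `p`. -/
noncomputable def dotL (p : I → ℝ) : (I → ℝ) →ₗ[ℝ] ℝ where
  toFun w := ∑ i, p i * w i
  map_add' u v := by
    simp only [Pi.add_apply, mul_add]
    rw [Finset.sum_add_distrib]
  map_smul' c u := by
    simp only [Pi.smul_apply, smul_eq_mul, RingHom.id_apply]
    rw [Finset.mul_sum]
    exact Finset.sum_congr rfl fun i _ => by ring

lemma dotL_coeZR (p : I → ℝ) (x : I → ℤ) : dotL p (coeZR x) = dotp p x := rfl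

/-- identity map into the Euclidean structure. -/
def toE (w : I → ℝ) : E := WithLp.toLp 2 w

@[simp] lemma toE_apply (w : I → ℝ) (i : I) : toE w i = w i := rfl

lemma inner_eq_dotL (p : I → ℝ) (w : I → ℝ) :
    ⟪toE p, toE w⟫ = dotL p w := by
  simp [dotL, toE, PiLp.inner_apply, RCLike.inner_apply, mul_comm]

lemma inner_coeZR (p : I → ℝ) (x : I → ℤ) :
    ⟪toE p, toE (coeZR x)⟫ = dotp p x := by
  rw [inner_eq_dotL, dotL_coeZR]

lemma continuous_sup' {β : Type*} [TopologicalSpace β] {α : Type*} {s : Finset α}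
    (hs : s.Nonempty) (f : α → β → ℝ) (hf : ∀ a, Continuous (f a)) :
    Continuous fun b => s.sup' hs (fun a => f a b) := by
  induction hs using Finset.Nonempty.cons_induction with
  | singleton a => simpa using hf a
  | cons a s h hs ih =>
      simp only [Finset.sup'_cons hs]
      exact (hf a).max ih

set_option maxHeartbeats 2000000 in
/-- Key real lemma: any point of the convex hull of a finite set lies in the convex
hull of the demand set at some price. -/
theorem key (U : E → ℝ) (z : E) :
    ∀ (n : ℕ) (A : Finset E), A.card ≤ n → z ∈ convexHull ℝ (A : Set E) →
      ∃ p : E, z ∈ convexHull ℝ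
        {x : E | x ∈ A ∧ ∀ y ∈ A, U y - ⟪p, y⟫ ≤ U x - ⟪p, x⟫} := by
  intro n
  induction n with
  | zero =>
      intro A hcard hz
      have : A = ∅ := Finset.card_eq_zero.mp (Nat.le_zero.mp hcard)
      subst this
      simp at hz
  | succ n IH =>
      intro A hcard hz
      classical
      rcases A.eq_empty_or_nonempty with rfl | hA
      · simp at hz
      by_cases hAz : ∀ x ∈ A, x = z
      · -- degenerate case : A = {z}
        refine ⟨0, ?_⟩
        apply subset_convexHull
        obtain ⟨a, ha⟩ := hA
        have hzA : z ∈ A := (hAz a ha) ▸ ha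
        refine ⟨hzA, fun y hy => ?_⟩
        rw [hAz y hy]
      obtain ⟨x₁, hx₁A, hx₁z⟩ := by
        push_neg at hAz; exact hAz
      set W : Submodule ℝ E := Submodule.span ℝ ((fun x => z - x) '' (A : Set E)) with hW
      have hzx_mem : ∀ x ∈ A, z - x ∈ W := fun x hx =>
        Submodule.subset_span ⟨x, hx, rfl⟩
      by_cases hcase : ∃ d : W, d ≠ 0 ∧ ∀ x ∈ A, ⟪(d : E), z - x⟫ ≤ 0
      · -- Case (b) : boundary direction, recurse on a smaller set
        obtain ⟨d, hd0, hdle⟩ := hcase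
        -- there is a strict point
        have hstrict : ∃ x ∈ A, ⟪(d : E), z - x⟫ ≠ 0 := by
          by_contra hc
          push_neg at hc
          have hker : W ≤ LinearMap.ker ((innerₛₗ ℝ) (d : E)) := by
            apply Submodule.span_le.mpr
            rintro v ⟨x, hx, rfl⟩
            exact LinearMap.mem_ker.mpr (hc x hx)
          have : ⟪(d : E), (d : E)⟫ = 0 := LinearMap.mem_ker.mp (hker d.2)
          exact hd0 (Subtype.ext (inner_self_eq_zero.mp this))
        -- convex representation of z
        rw [Finset.convexHull_eq] at hz
        obtain ⟨w, hw0, hw1, hwz⟩ := hz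
        have hrep : (∑ x ∈ A, w x • x) = z := by
          rw [← hwz, Finset.centerMass_eq_of_sum_1 A id hw1]
          rfl
        have hinner_sum : ∑ x ∈ A, w x * ⟪(d : E), x⟫ = ⟪(d : E), z⟫ := by
          rw [← hrep, inner_sum]
          exact Finset.sum_congr rfl fun x _ => (real_inner_smul_right _ _ _).symm
        have hsum0 : ∑ x ∈ A, w x * ⟪(d : E), z - x⟫ = 0 := by
          have : ∀ x ∈ A, w x * ⟪(d : E), z - x⟫
              = w x * ⟪(d : E), z⟫ - w x * ⟪(d : E), x⟫ := by
            intro x _; rw [inner_sub_right]; ring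
          rw [Finset.sum_congr rfl this, Finset.sum_sub_distrib, ← Finset.sum_mul, hw1,
            hinner_sum]
          ring
        have hterm0 : ∀ x ∈ A, w x * ⟪(d : E), z - x⟫ = 0 :=
          (Finset.sum_eq_zero_iff_of_nonpos fun x hx =>
            mul_nonpos_of_nonneg_of_nonpos (hw0 x hx) (hdle x hx)).mp hsum0
        set X' : Finset E := A.filter (fun x => ⟪(d : E), z - x⟫ = 0) with hX'
        have hsupp : ∀ x ∈ A, w x ≠ 0 → x ∈ X' := by
          intro x hx hwx
          refine Finset.mem_filter.mpr ⟨hx, ?_⟩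
          have := hterm0 x hx
          rcases mul_eq_zero.mp this with h | h
          · exact absurd h hwx
          · exact h
        have hsubsupp : A.filter (fun x => w x ≠ 0) ⊆ X' := by
          intro x hx
          obtain ⟨hxA, hwx⟩ := Finset.mem_filter.mp hx
          exact hsupp x hxA hwx
        have hzX' : z ∈ convexHull ℝ (X' : Set E) := by
          rw [← hwz, ← Finset.centerMass_filter_ne_zero (w := w) id]
          apply Finset.centerMass_mem_convexHull
          · intro i hi; exact hw0 i (Finset.filter_subset _ _ hi)
          · rw [Finset.sum_filter_ne_zero, hw1]; exact one_pos
          · intro i hi; exact hsubsupp hi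
        obtain ⟨x₂, hx₂A, hx₂ne⟩ := hstrict
        have hx₂X' : x₂ ∉ X' := fun h => hx₂ne (Finset.mem_filter.mp h).2
        have hcard' : X'.card ≤ n := by
          have hss : X' ⊂ A := ⟨Finset.filter_subset _ _, fun h => hx₂X' (h hx₂A)⟩
          have := Finset.card_lt_card hss
          omega
        obtain ⟨p', hp'⟩ := IH X' hcard' hzX'
        -- build the price for A
        set c : ℝ := ⟪(d : E), z⟫ with hc
        have hX'ne : X'.Nonempty := by
          rcases X'.eq_empty_or_nonempty with h | h
          · rw [h] at hzX'; simp at hzX'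
          · exact h
        obtain ⟨x₀, hx₀⟩ := hX'ne
        set c : ℝ := ⟪(d : E), z⟫ with hc
        have hinX' : ∀ x ∈ X', ⟪(d : E), x⟫ = c := by
          intro x hx
          have h0 : ⟪(d : E), z - x⟫ = (0:ℝ) := (Finset.mem_filter.mp hx).2
          rw [inner_sub_right] at h0
          linarith
        have hgap : ∀ y ∈ A, y ∉ X' → c < ⟪(d : E), y⟫ := by
          intro y hy hyn
          have h1 : ⟪(d : E), z - y⟫ ≤ (0:ℝ) := hdle y hy
          have h2 : ⟪(d : E), z - y⟫ ≠ (0:ℝ) := fun h => hyn (Finset.mem_filter.mpr ⟨hy, h⟩)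
          rw [inner_sub_right] at h1 h2
          rcases lt_or_eq_of_le h1 with h | h
          · linarith
          · exact absurd h h2
        set m₀ : ℝ := U x₀ - ⟪p', x₀⟫ with hm₀
        set ratio : E → ℝ := fun y => (U y - ⟪p', y⟫ - m₀) / (⟪(d : E), y⟫ - c) with hratio
        set t : ℝ := 1 + ∑ y ∈ A, max 0 (ratio y) with ht
        have htge : ∀ y ∈ A, ratio y ≤ t := by
          intro y hy
          have h1 : ratio y ≤ max 0 (ratio y) := le_max_right _ _
          have h2 : max 0 (ratio y) ≤ ∑ y ∈ A, max 0 (ratio y) :=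
            Finset.single_le_sum (f := fun y => max 0 (ratio y))
              (fun i _ => le_max_left _ _) hy
          rw [ht]; linarith
        refine ⟨p' + t • (d : E), ?_⟩
        have hsub : {x : E | x ∈ X' ∧ ∀ y ∈ X', U y - ⟪p', y⟫ ≤ U x - ⟪p', x⟫} ⊆
            {x : E | x ∈ A ∧ ∀ y ∈ A,
              U y - ⟪p' + t • (d : E), y⟫ ≤ U x - ⟪p' + t • (d : E), x⟫} := by
          rintro x ⟨hxX', hxmax⟩
          have hxA : x ∈ A := Finset.filter_subset _ _ hxX'
          refine ⟨hxA, fun y hy => ?_⟩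
          rw [inner_add_left, inner_add_left, real_inner_smul_left, real_inner_smul_left]
          by_cases hyX' : y ∈ X'
          · have hm := hxmax y hyX'
            rw [hinX' y hyX', hinX' x hxX']
            linarith
          · have hgy := hgap y hy hyX'
            have h1 : ratio y ≤ t := htge y hy
            have hpos : (0:ℝ) < ⟪(d : E), y⟫ - c := by linarith
            have h2 : U y - ⟪p', y⟫ - m₀ ≤ t * (⟪(d : E), y⟫ - c) := by
              have heq : U y - ⟪p', y⟫ - m₀ = ratio y * (⟪(d : E), y⟫ - c) := by
                rw [hratio]
                exact (div_mul_cancel₀ _ (ne_of_gt hpos)).symm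
              rw [heq]
              exact mul_le_mul_of_nonneg_right h1 (le_of_lt hpos) |>.trans_eq rfl
            have h3 : m₀ ≤ U x - ⟪p', x⟫ := hxmax x₀ hx₀
            rw [hinX' x hxX']
            nlinarith
        exact convexHull_mono hsub hp' 
      · -- Case (a) : interior-type case, minimize g over W
        push_neg at hcase
        have hw₁ : z - x₁ ∈ W := hzx_mem x₁ hx₁A
        have hw₁0 : z - x₁ ≠ 0 := sub_ne_zero.mpr (Ne.symm hx₁z)
        set w₁ : W := ⟨z - x₁, hw₁⟩ with hw₁def
        have hw₁0' : w₁ ≠ 0 := by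
          intro h
          exact hw₁0 (by simpa [hw₁def] using congrArg (Subtype.val) h)
        have hw₁norm : ‖w₁‖ ≠ 0 := norm_ne_zero_iff.mpr hw₁0'
        have hsphne : (Metric.sphere (0:W) 1).Nonempty := by
          refine ⟨‖w₁‖⁻¹ • w₁, ?_⟩
          rw [mem_sphere_zero_iff_norm, norm_smul, norm_inv, norm_norm,
            inv_mul_cancel₀ hw₁norm]
        set F : W → ℝ := fun q => A.sup' hA (fun x => ⟪(q:E), z - x⟫) with hF
        have hFcont : Continuous F :=
          continuous_sup' hA _
            (fun x => Continuous.inner continuous_subtype_val continuous_const)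
        obtain ⟨dm, hdm_mem, hdm_min⟩ :=
          (isCompact_sphere (0:W) 1).exists_isMinOn hsphne hFcont.continuousOn
        set δ : ℝ := F dm with hδ
        have hdm_norm : ‖dm‖ = 1 := mem_sphere_zero_iff_norm.mp hdm_mem
        have hdm0 : dm ≠ 0 := by
          intro h; rw [h] at hdm_norm; simp at hdm_norm
        have hδpos : 0 < δ := by
          obtain ⟨x, hx, hlt⟩ := hcase dm hdm0
          rw [hδ, hF]
          exact lt_of_lt_of_le hlt (Finset.le_sup' (fun x => ⟪(dm:E), z - x⟫) hx)
        set g : W → ℝ := fun q => A.sup' hA (fun x => U x - ⟪(q:E), x⟫) + ⟪(q:E), z⟫ with hg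
        have hgcont : Continuous g := by
          apply Continuous.add
          · exact continuous_sup' hA _
              (fun x => continuous_const.sub
                (Continuous.inner continuous_subtype_val continuous_const))
          · exact Continuous.inner continuous_subtype_val continuous_const
        set Um : ℝ := A.inf' hA U with hUm
        have hcoer : ∀ q : W, Um + δ * ‖q‖ ≤ g q := by
          intro q
          by_cases hq0 : q = 0
          · subst hq0
            obtain ⟨x, hx⟩ := id hA
            have h1 : Um ≤ U x := Finset.inf'_le U hx
            have h2 : U x - ⟪((0:W):E), x⟫ ≤ A.sup' hA (fun y => U y - ⟪((0:W):E), y⟫) :=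
              Finset.le_sup' (fun y => U y - ⟪((0:W):E), y⟫) hx
            simp only [hg, norm_zero, mul_zero, add_zero]
            simp only [Submodule.coe_zero, inner_zero_left, sub_zero] at h2 ⊢
            linarith
          · set u : W := ‖q‖⁻¹ • q with hu
            have hqnorm : ‖q‖ ≠ 0 := norm_ne_zero_iff.mpr hq0
            have hu_mem : u ∈ Metric.sphere (0:W) 1 := by
              rw [mem_sphere_zero_iff_norm, hu, norm_smul, norm_inv, norm_norm,
                inv_mul_cancel₀ hqnorm]
            have hδle : δ ≤ F u := isMinOn_iff.mp hdm_min u hu_mem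
            obtain ⟨x, hx, hxe⟩ := Finset.exists_mem_eq_sup' hA (fun x => ⟪(u:E), z - x⟫)
            have h1 : δ ≤ ⟪(u:E), z - x⟫ := by
              rw [← hxe]; exact hδle
            have hqu : (q:E) = ‖q‖ • (u:E) := by
              rw [hu, Submodule.coe_smul, smul_smul, mul_inv_cancel₀ hqnorm, one_smul]
            have h2 : ⟪(q:E), z - x⟫ = ‖q‖ * ⟪(u:E), z - x⟫ := by
              rw [hqu, real_inner_smul_left]
            have h3 : Um ≤ U x := Finset.inf'_le U hx
            have h4 : U x - ⟪(q:E), x⟫ ≤ A.sup' hA (fun y => U y - ⟪(q:E), y⟫) :=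
              Finset.le_sup' (fun y => U y - ⟪(q:E), y⟫) hx
            have h5 : δ * ‖q‖ ≤ ⟪(q:E), z - x⟫ := by
              rw [h2]
              nlinarith [norm_nonneg q]
            have h6 : ⟪(q:E), z - x⟫ = ⟪(q:E), z⟫ - ⟪(q:E), x⟫ := inner_sub_right _ _ _
            simp only [hg]
            linarith
        set R : ℝ := (g 0 - Um) / δ with hR
        have hg0 : Um ≤ g 0 := by
          have := hcoer 0
          simpa using this
        have hR0 : 0 ≤ R := div_nonneg (by linarith) (le_of_lt hδpos)
        obtain ⟨p₀, hp₀K, hp₀min⟩ := (isCompact_closedBall (0:W) R).exists_isMinOn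
          ⟨0, Metric.mem_closedBall_self hR0⟩ hgcont.continuousOn
        have hglob : ∀ q : W, g p₀ ≤ g q := by
          intro q
          by_cases hqR : ‖q‖ ≤ R
          · exact isMinOn_iff.mp hp₀min q
              (by simpa [Metric.mem_closedBall, dist_zero_right] using hqR)
          · push_neg at hqR
            have h1 : g p₀ ≤ g 0 := isMinOn_iff.mp hp₀min 0 (Metric.mem_closedBall_self hR0)
            have h2 : Um + δ * ‖q‖ ≤ g q := hcoer q
            have h3 : R * δ = g 0 - Um := by
              rw [hR]
              exact div_mul_cancel₀ _ (ne_of_gt hδpos)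
            nlinarith [mul_lt_mul_of_pos_left hqR hδpos]
        set M : ℝ := A.sup' hA (fun x => U x - ⟪(p₀:E), x⟫) with hM
        set Dset : Set E :=
          {x : E | x ∈ A ∧ ∀ y ∈ A, U y - ⟪(p₀:E), y⟫ ≤ U x - ⟪(p₀:E), x⟫} with hDset
        by_cases hzD : z ∈ convexHull ℝ Dset
        · exact ⟨(p₀:E), hzD⟩
        exfalso
        set Df : Finset E := A.filter (fun x => M ≤ U x - ⟪(p₀:E), x⟫) with hDf
        have hDfeq : (Df : Set E) = Dset := by
          ext x
          simp only [hDf, Finset.coe_filter, Set.mem_setOf_eq, hDset]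
          constructor
          · rintro ⟨hxA, hxM⟩
            refine ⟨hxA, fun y hy => ?_⟩
            have hy' : U y - ⟪(p₀:E), y⟫ ≤ A.sup' hA (fun x => U x - ⟪(p₀:E), x⟫) :=
              Finset.le_sup' (fun x => U x - ⟪(p₀:E), x⟫) hy
            rw [← hM] at hy'
            exact le_trans hy' hxM
          · rintro ⟨hxA, hmax⟩
            refine ⟨hxA, ?_⟩
            obtain ⟨y, hy, hye⟩ := Finset.exists_mem_eq_sup' hA
              (fun x => U x - ⟪(p₀:E), x⟫)
            rw [hM, hye]
            exact hmax y hy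
        have hDclosed : IsClosed (convexHull ℝ Dset) := by
          rw [← hDfeq]
          exact (Df.finite_toSet.isCompact_convexHull (𝕜 := ℝ)).isClosed
        obtain ⟨f, u, hfu, hfz⟩ :=
          geometric_hahn_banach_closed_point (convex_convexHull ℝ Dset) hDclosed hzD
        set v : E := (InnerProductSpace.toDual ℝ E).symm f with hv
        have hvf : ∀ y : E, ⟪v, y⟫ = f y := fun y => InnerProductSpace.toDual_symm_apply
        set dP : W := W.orthogonalProjectionOnto v with hdP
        have hdPW : ∀ w' ∈ W, ⟪(dP:E), w'⟫ = ⟪v, w'⟫ := by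
          intro w' hw'
          have h0 : ⟪v - (dP:E), w'⟫ = (0:ℝ) := W.starProjection_inner_eq_zero v w' hw'
          rw [inner_sub_left] at h0
          linarith
        have hDfpos : ∀ x ∈ Df, (0:ℝ) < ⟪(dP:E), z - x⟫ := by
          intro x hx
          have hxA : x ∈ A := Finset.filter_subset _ _ hx
          have hxD : x ∈ Dset := by
            rw [← hDfeq]; exact hx
          have h1 : f x < u := hfu x (subset_convexHull ℝ _ hxD)
          have h2 : ⟪(dP:E), z - x⟫ = ⟪v, z - x⟫ := hdPW _ (hzx_mem x hxA)
          rw [h2, hvf (z - x), map_sub]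
          linarith
        set tstep : ℝ := A.inf' hA (fun x => if M ≤ U x - ⟪(p₀:E), x⟫ then 1
            else (M - (U x - ⟪(p₀:E), x⟫)) / (|⟪(dP:E), z - x⟫| + 1)) with htstep
        have htpos : (0:ℝ) < tstep := by
          rw [htstep]
          apply (Finset.lt_inf'_iff hA).mpr
          intro x hx
          by_cases hxM : M ≤ U x - ⟪(p₀:E), x⟫
          · rw [if_pos hxM]; norm_num
          · rw [if_neg hxM]
            push_neg at hxM
            apply div_pos (by linarith) (by positivity)
        set q : W := p₀ - tstep • dP with hq
        have hqval : ∀ x : E, ⟪(q:E), x⟫ = ⟪(p₀:E), x⟫ - tstep * ⟪(dP:E), x⟫ := by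
          intro x
          rw [hq, Submodule.coe_sub, Submodule.coe_smul, inner_sub_left,
            real_inner_smul_left]
        have hlt : g q < g p₀ := by
          have hgp₀ : g p₀ = M + ⟪(p₀:E), z⟫ := by simp only [hg, hM]
          have hsup : A.sup' hA (fun x => U x - ⟪(q:E), x⟫)
              < M + ⟪(p₀:E), z⟫ - ⟪(q:E), z⟫ := by
            apply (Finset.sup'_lt_iff hA).mpr
            intro x hx
            have hxle : U x - ⟪(p₀:E), x⟫ ≤ M := by
              rw [hM]
              exact Finset.le_sup' (fun x => U x - ⟪(p₀:E), x⟫) hx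
            have hqz := hqval z
            have hqx := hqval x
            have hzx : ⟪(dP:E), z - x⟫ = ⟪(dP:E), z⟫ - ⟪(dP:E), x⟫ := inner_sub_right _ _ _
            by_cases hxDf : M ≤ U x - ⟪(p₀:E), x⟫
            · have hxDf' : x ∈ Df := Finset.mem_filter.mpr ⟨hx, hxDf⟩
              have hpos := hDfpos x hxDf'
              have hprod : 0 < tstep * ⟪(dP:E), z - x⟫ := mul_pos htpos hpos
              have hexp : tstep * ⟪(dP:E), z - x⟫
                  = tstep * ⟪(dP:E), z⟫ - tstep * ⟪(dP:E), x⟫ := by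
                rw [hzx]; ring
              rw [hqx, hqz]
              linarith
            · push_neg at hxDf
              have htle : tstep ≤ (M - (U x - ⟪(p₀:E), x⟫)) / (|⟪(dP:E), z - x⟫| + 1) := by
                have h0 : tstep ≤ (if M ≤ U x - ⟪(p₀:E), x⟫ then (1:ℝ)
                    else (M - (U x - ⟪(p₀:E), x⟫)) / (|⟪(dP:E), z - x⟫| + 1)) := by
                  rw [htstep]
                  exact Finset.inf'_le _ hx
                rwa [if_neg (not_le.mpr hxDf)] at h0
              have ha0 : (0:ℝ) ≤ |⟪(dP:E), z - x⟫| := abs_nonneg _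
              have h5 : tstep * |⟪(dP:E), z - x⟫|
                  ≤ (M - (U x - ⟪(p₀:E), x⟫)) / (|⟪(dP:E), z - x⟫| + 1)
                    * |⟪(dP:E), z - x⟫| :=
                mul_le_mul_of_nonneg_right htle ha0
              have h6 : (M - (U x - ⟪(p₀:E), x⟫)) / (|⟪(dP:E), z - x⟫| + 1)
                  * |⟪(dP:E), z - x⟫| < M - (U x - ⟪(p₀:E), x⟫) := by
                rw [div_mul_eq_mul_div, div_lt_iff₀ (by linarith)]
                nlinarith
              have h8 : tstep * ⟪(dP:E), x⟫ - tstep * ⟪(dP:E), z⟫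
                  = tstep * (-⟪(dP:E), z - x⟫) := by
                rw [hzx]; ring
              have h9 : tstep * (-⟪(dP:E), z - x⟫) ≤ tstep * |⟪(dP:E), z - x⟫| :=
                mul_le_mul_of_nonneg_left (neg_le_abs _) (le_of_lt htpos)
              rw [hqx, hqz]
              linarith
          simp only [hg] at hsup ⊢
          linarith
        exact absurd (hglob q) (not_le.mpr hlt)

lemma floor_coeZR (x : I → ℤ) : (fun i => ⌊coeZR x i⌋) = x := by
  funext i
  simp [coeZR]

end ConcaveAux

open ConcaveAux

/-- characterization of discrete concavity: `V` is concave (every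
integer point of `conv(X)` is demanded at some price) iff for every price `p`,
`conv(D(p)) ∩ ℤ^I = D(p)`. -/
theorem concave_iff_demand_integrally_convex {I : Type*} [Fintype I]
    (X : Finset (I → ℤ)) (V : (I → ℤ) → ℝ) :
    (∀ z : I → ℤ, coeZR z ∈ convexHull ℝ (coeZR '' (↑X : Set (I → ℤ))) →
        ∃ p : I → ℝ, z ∈ X ∧ ∀ y ∈ X, V y - dotp p y ≤ V z - dotp p z)
    ↔ (∀ p : I → ℝ, ∀ z : I → ℤ,
        (coeZR z ∈ convexHull ℝ
            (coeZR '' {x : I → ℤ | x ∈ X ∧ ∀ y ∈ X, V y - dotp p y ≤ V x - dotp p x})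
          ↔ (z ∈ X ∧ ∀ y ∈ X, V y - dotp p y ≤ V z - dotp p z))) := by
  classical
  constructor
  · -- concavity implies integrally convex demand
    intro hconc p z
    constructor
    · intro hz
      have hsub : {x : I → ℤ | x ∈ X ∧ ∀ y ∈ X, V y - dotp p y ≤ V x - dotp p x}
          ⊆ (↑X : Set (I → ℤ)) := fun x hx => hx.1
      have hzX : coeZR z ∈ convexHull ℝ (coeZR '' (↑X : Set (I → ℤ))) :=
        convexHull_mono (Set.image_mono hsub) hz
      obtain ⟨q, hzX', hq⟩ := hconc z hzX
      set Dint : Finset (I → ℤ) :=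
        X.filter (fun x => ∀ y ∈ X, V y - dotp p y ≤ V x - dotp p x) with hDint
      set Dimg : Finset (I → ℝ) := Dint.image coeZR with hDimg
      have hseteq : coeZR '' {x : I → ℤ | x ∈ X ∧
          ∀ y ∈ X, V y - dotp p y ≤ V x - dotp p x} = (Dimg : Set (I → ℝ)) := by
        rw [hDimg, Finset.coe_image, hDint, Finset.coe_filter]
      rw [hseteq, Finset.convexHull_eq] at hz
      obtain ⟨w, hw0, hw1, hcm⟩ := hz
      have hrep : (∑ y ∈ Dimg, w y • y) = coeZR z := by
        rw [← hcm, Finset.centerMass_eq_of_sum_1 Dimg id hw1]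
        rfl
      -- the preimage map
      set φ : (I → ℝ) → (I → ℤ) := fun u i => ⌊u i⌋ with hφdef
      have hφ : ∀ x : I → ℤ, φ (coeZR x) = x := fun x => floor_coeZR x
      have hmem : ∀ y ∈ Dimg, φ y ∈ X ∧ (∀ y' ∈ X, V y' - dotp p y' ≤ V (φ y) - dotp p (φ y))
          ∧ coeZR (φ y) = y := by
        intro y hy
        obtain ⟨x, hx, rfl⟩ := Finset.mem_image.mp hy
        obtain ⟨hxX, hxP⟩ := Finset.mem_filter.mp hx
        rw [hφ x]
        exact ⟨hxX, hxP, rfl⟩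
      have hDne : Dimg.Nonempty := by
        rcases Dimg.eq_empty_or_nonempty with h | h
        · rw [h] at hcm
          simp [Finset.centerMass_empty] at hcm
          exact absurd hcm.symm (by
            intro hcontr
            have := congrArg (fun u => u) hcontr
            exact absurd hw1 (by rw [h]; simp))
        · exact h
      obtain ⟨y₀, hy₀⟩ := hDne
      obtain ⟨hξ₀X, hξ₀P, hξ₀e⟩ := hmem y₀ hy₀
      set ξ₀ : I → ℤ := φ y₀
      set M : ℝ := V ξ₀ - dotp p ξ₀ with hMdef
      have hMeq : ∀ y ∈ Dimg, V (φ y) - dotp p (φ y) = M := by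
        intro y hy
        have h1 := hξ₀P (φ y) (hmem y hy).1
        have h2 := (hmem y hy).2.1 ξ₀ hξ₀X
        rw [hMdef]
        linarith
      -- linear functional computations
      have hdotsum : ∀ r : I → ℝ, ∑ y ∈ Dimg, w y * dotL r y = dotp r z := by
        intro r
        have := congrArg (dotL r) hrep
        rw [map_sum] at this
        simp only [map_smul, smul_eq_mul] at this
        rw [this, dotL_coeZR]
      have hdot_p : ∀ y ∈ Dimg, dotp p (φ y) = dotL p y := by
        intro y hy
        rw [← (hmem y hy).2.2, dotL_coeZR, hφ]
      have hdot_q : ∀ y ∈ Dimg, dotp q (φ y) = dotL q y := by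
        intro y hy
        rw [← (hmem y hy).2.2, dotL_coeZR, hφ]
      set S : ℝ := ∑ y ∈ Dimg, w y * V (φ y) with hSdef
      have hS1 : S = M + dotp p z := by
        have : ∀ y ∈ Dimg, w y * V (φ y) = w y * M + w y * dotL p y := by
          intro y hy
          have h1 := hMeq y hy
          have h2 := hdot_p y hy
          have : V (φ y) = M + dotL p y := by linarith
          rw [this]; ring
        rw [hSdef, Finset.sum_congr rfl this, Finset.sum_add_distrib, ← Finset.sum_mul,
          hw1, hdotsum p]
        ring
      have hS2 : S ≤ V z := by
        have hle : ∀ y ∈ Dimg, w y * V (φ y) ≤ w y * (V z - dotp q z) + w y * dotL q y := by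
          intro y hy
          have h1 : V (φ y) - dotp q (φ y) ≤ V z - dotp q z := hq (φ y) (hmem y hy).1
          have h2 := hdot_q y hy
          have h3 : V (φ y) ≤ (V z - dotp q z) + dotL q y := by linarith
          calc w y * V (φ y) ≤ w y * ((V z - dotp q z) + dotL q y) :=
                mul_le_mul_of_nonneg_left h3 (hw0 y hy)
            _ = w y * (V z - dotp q z) + w y * dotL q y := by ring
        have := Finset.sum_le_sum hle
        rw [← hSdef] at this
        rw [Finset.sum_add_distrib, ← Finset.sum_mul, hw1, hdotsum q] at this
        linarith
      refine ⟨hzX', fun y hy => ?_⟩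
      have h1 : V y - dotp p y ≤ M := hξ₀P y hy
      linarith
    · intro hzD
      exact subset_convexHull ℝ _ ⟨z, hzD, rfl⟩
  · -- integrally convex demand implies concavity
    intro H z hz
    set U : EuclideanSpace ℝ I → ℝ := fun u => V (fun i => ⌊u i⌋) with hU
    set A : Finset (EuclideanSpace ℝ I) := X.image (fun x => toE (coeZR x)) with hA
    have hzA : toE (coeZR z) ∈ convexHull ℝ (A : Set (EuclideanSpace ℝ I)) := by
      rw [hA, Finset.coe_image]
      have h := (WithLp.linearEquiv 2 ℝ (I → ℝ)).symm.toLinearMap.image_convexHull (coeZR '' (↑X : Set (I → ℤ)))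
      rw [Set.image_image] at h
      have h2 := Set.mem_image_of_mem ((WithLp.linearEquiv 2 ℝ (I → ℝ)).symm.toLinearMap) hz
      rw [h] at h2
      exact h2
    obtain ⟨p, hp⟩ := key U (toE (coeZR z)) A.card A le_rfl hzA
    have hseteq : {x : EuclideanSpace ℝ I | x ∈ A ∧
          ∀ y ∈ A, U y - ⟪p, y⟫ ≤ U x - ⟪p, x⟫}
        = (fun x => toE (coeZR x)) '' {x : I → ℤ | x ∈ X ∧
          ∀ y ∈ X, V y - dotp p y ≤ V x - dotp p x} := by
      ext u
      constructor
      · rintro ⟨huA, humax⟩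
        obtain ⟨x, hxX, rfl⟩ := Finset.mem_image.mp huA
        refine ⟨x, ⟨hxX, fun y hy => ?_⟩, rfl⟩
        have h1 := humax (toE (coeZR y)) (Finset.mem_image.mpr ⟨y, hy, rfl⟩)
        have hUy : U (toE (coeZR y)) = V y := by
          rw [hU]
          exact congrArg V (floor_coeZR y)
        have hUx : U (toE (coeZR x)) = V x := by
          rw [hU]
          exact congrArg V (floor_coeZR x)
        have hiy : ⟪p, toE (coeZR y)⟫ = dotp p y := inner_coeZR p y
        have hix : ⟪p, toE (coeZR x)⟫ = dotp p x := inner_coeZR p x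
        rw [hUy, hUx, hiy, hix] at h1
        exact h1
      · rintro ⟨x, ⟨hxX, hxP⟩, rfl⟩
        refine ⟨Finset.mem_image.mpr ⟨x, hxX, rfl⟩, fun y hy => ?_⟩
        obtain ⟨y', hy'X, rfl⟩ := Finset.mem_image.mp hy
        have hgoal : U (toE (coeZR y')) - ⟪p, toE (coeZR y')⟫
            ≤ U (toE (coeZR x)) - ⟪p, toE (coeZR x)⟫ := by
          have hUy : U (toE (coeZR y')) = V y' := by
            rw [hU]
            exact congrArg V (floor_coeZR y')
          have hUx : U (toE (coeZR x)) = V x := by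
            rw [hU]
            exact congrArg V (floor_coeZR x)
          have hiy : ⟪p, toE (coeZR y')⟫ = dotp p y' := inner_coeZR p y'
          have hix : ⟪p, toE (coeZR x)⟫ = dotp p x := inner_coeZR p x
          rw [hUy, hUx, hiy, hix]
          exact hxP y' hy'X
        exact hgoal
    rw [hseteq] at hp
    have h := (WithLp.linearEquiv 2 ℝ (I → ℝ)).toLinearMap.image_convexHull ((fun x => toE (coeZR x)) '' {x : I → ℤ | x ∈ X ∧ ∀ y ∈ X, V y - dotp p y ≤ V x - dotp p x})
    have h2 := Set.mem_image_of_mem (WithLp.linearEquiv 2 ℝ (I → ℝ)).toLinearMap hp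
    rw [h, Set.image_image] at h2
    exact ⟨p, (H p z).mp h2⟩
end

section
/- Suppose X ⊆ {0,1}^I (agent demands at most one unit of each good) and V : X → ℝ. If V is a substitutes valuation, then whenever a price vector p satisfies |D(p)| = 2, writing D(p) = {x, x'}, the difference x' - x has at most one positive component and at most one negative component. -/
lemma dotp_shift {I : Type*} [Fintype I] [DecidableEq I] (p : I → ℝ) (i : I) (lam : ℝ)
    (y : I → ℤ) :
    dotp (fun k => p k + if k = i then lam else 0) y = dotp p y + lam * (y i : ℝ) := by
  unfold dotp
  simp [add_mul, Finset.sum_add_distrib, ite_mul, Finset.sum_ite_eq']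

lemma key_neg {I : Type*} [Fintype I] [DecidableEq I]
    (X : Finset (I → ℤ)) (hX01 : ∀ x ∈ X, ∀ i, x i = 0 ∨ x i = 1)
    (V : (I → ℤ) → ℝ)
    (hsub : ∀ (p : I → ℝ) (i : I) (lam : ℝ), 0 < lam →
      ∀ x x' : I → ℤ,
        {z : I → ℤ | z ∈ X ∧ ∀ y ∈ X, V y - dotp p y ≤ V z - dotp p z} = {x} →
        {z : I → ℤ | z ∈ X ∧ ∀ y ∈ X,
            V y - dotp (fun k => p k + if k = i then lam else 0) y
              ≤ V z - dotp (fun k => p k + if k = i then lam else 0) z} = {x'} →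
        ∀ k, k ≠ i → x k ≤ x' k)
    (p : I → ℝ) (x x' : I → ℤ)
    (hset : {z : I → ℤ | z ∈ X ∧ ∀ y ∈ X, V y - dotp p y ≤ V z - dotp p z}
        = ({x, x'} : Set (I → ℤ))) :
    ∀ i j : I, x' i - x i < 0 → x' j - x j < 0 → i = j := by
  intro i j hi hj
  by_contra hij
  -- basic facts about x and x'
  have hxmem : x ∈ {z : I → ℤ | z ∈ X ∧ ∀ y ∈ X, V y - dotp p y ≤ V z - dotp p z} := by
    rw [hset]; exact Set.mem_insert _ _
  have hx'mem : x' ∈ {z : I → ℤ | z ∈ X ∧ ∀ y ∈ X, V y - dotp p y ≤ V z - dotp p z} := by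
    rw [hset]; exact Set.mem_insert_of_mem _ rfl
  obtain ⟨hxX, hxmax⟩ := hxmem
  obtain ⟨hx'X, hx'max⟩ := hx'mem
  have hUeq : V x - dotp p x = V x' - dotp p x' :=
    le_antisymm (hx'max x hxX) (hxmax x' hx'X)
  have hxi : x i = 1 := by rcases hX01 x hxX i with h | h <;> rcases hX01 x' hx'X i with h' | h' <;> omega
  have hx'i : x' i = 0 := by rcases hX01 x hxX i with h | h <;> rcases hX01 x' hx'X i with h' | h' <;> omega
  -- membership in demand set from maximality
  have hchar : ∀ z ∈ X, (∀ y ∈ X, V y - dotp p y ≤ V z - dotp p z) → z = x ∨ z = x' := by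
    intro z hz hmz
    have : z ∈ ({x, x'} : Set (I → ℤ)) := by rw [← hset]; exact ⟨hz, hmz⟩
    simpa using this
  -- lowered price p₀ = p - e^i
  set p₀ : I → ℝ := fun k => p k + if k = i then (-1 : ℝ) else 0 with hp₀
  have hd₀ : ∀ y : I → ℤ, dotp p₀ y = dotp p y - (y i : ℝ) := by
    intro y; rw [hp₀, dotp_shift]; ring
  have hd₂ : ∀ y : I → ℤ,
      dotp (fun k => p₀ k + if k = i then (2 : ℝ) else 0) y = dotp p y + (y i : ℝ) := by
    intro y; rw [dotp_shift, hd₀]; ring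
  -- S1 : demand at p₀ is {x}
  have S1 : {z : I → ℤ | z ∈ X ∧ ∀ y ∈ X, V y - dotp p₀ y ≤ V z - dotp p₀ z} = {x} := by
    ext z
    simp only [Set.mem_setOf_eq, Set.mem_singleton_iff]
    constructor
    · rintro ⟨hzX, hzmax⟩
      have hzi01 := hX01 z hzX i
      have hzi1 : (z i : ℝ) ≤ 1 := by rcases hzi01 with h | h <;> simp [h]
      have hxle : V x - dotp p₀ x ≤ V z - dotp p₀ z := hzmax x hxX
      rw [hd₀, hd₀, hxi] at hxle
      push_cast at hxle
      -- U x + 1 ≤ U z + z i, so U x ≤ U z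
      have hUzx : V x - dotp p x ≤ V z - dotp p z := by linarith
      have hzdem : z = x ∨ z = x' := by
        refine hchar z hzX (fun y hy => le_trans (hxmax y hy) hUzx)
      rcases hzdem with h | h
      · exact h
      · exfalso
        have e1 : ((z i : ℤ) : ℝ) = 0 := by rw [h, hx'i]; norm_num
        have e2 : V z - dotp p z = V x - dotp p x := by rw [h, ← hUeq]
        linarith
    · rintro rfl
      refine ⟨hxX, fun y hy => ?_⟩
      have hyi1 : (y i : ℝ) ≤ 1 := by rcases hX01 y hy i with h | h <;> simp [h]
      have := hxmax y hy
      rw [hd₀, hd₀, hxi]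
      push_cast
      linarith
  -- S2 : demand at p₀ + 2 e^i = p + e^i is {x'}
  have S2 : {z : I → ℤ | z ∈ X ∧ ∀ y ∈ X,
      V y - dotp (fun k => p₀ k + if k = i then (2 : ℝ) else 0) y
        ≤ V z - dotp (fun k => p₀ k + if k = i then (2 : ℝ) else 0) z} = {x'} := by
    ext z
    simp only [Set.mem_setOf_eq, Set.mem_singleton_iff]
    constructor
    · rintro ⟨hzX, hzmax⟩
      have hzi0 : (0 : ℝ) ≤ (z i : ℝ) := by rcases hX01 z hzX i with h | h <;> simp [h]
      have hx'le := hzmax x' hx'X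
      rw [hd₂, hd₂, hx'i] at hx'le
      push_cast at hx'le
      -- U x' ≤ U z - z i ≤ U z
      have hUzx : V x - dotp p x ≤ V z - dotp p z := by rw [hUeq]; linarith
      have hzdem : z = x ∨ z = x' :=
        hchar z hzX (fun y hy => le_trans (hxmax y hy) hUzx)
      rcases hzdem with h | h
      · exfalso
        have e1 : ((z i : ℤ) : ℝ) = 1 := by rw [h, hxi]; norm_num
        have e2 : V z - dotp p z = V x - dotp p x := by rw [h]
        linarith
      · exact h
    · rintro rfl
      refine ⟨hx'X, fun y hy => ?_⟩
      have hyi0 : (0 : ℝ) ≤ (y i : ℝ) := by rcases hX01 y hy i with h | h <;> simp [h]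
      have h1 := hx'max y hy
      rw [hd₂, hd₂, hx'i]
      push_cast
      linarith
  have := hsub p₀ i 2 (by norm_num) x x' S1 S2 j (fun h => hij h.symm)
  omega

/-- one direction of the Fujishige–Yang characterization, Fact 5:
if `X ⊆ {0,1}^I` and `V` is a substitutes valuation, then whenever a demand set has
exactly two elements `{x,x'}`, the difference `x' - x` has at most one positive and
at most one negative component. -/
theorem substitutes_two_element_demand {I : Type*} [Fintype I] [DecidableEq I]
    (X : Finset (I → ℤ)) (hX01 : ∀ x ∈ X, ∀ i, x i = 0 ∨ x i = 1)
    (V : (I → ℤ) → ℝ)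
    (hsub : ∀ (p : I → ℝ) (i : I) (lam : ℝ), 0 < lam →
      ∀ x x' : I → ℤ,
        {z : I → ℤ | z ∈ X ∧ ∀ y ∈ X, V y - dotp p y ≤ V z - dotp p z} = {x} →
        {z : I → ℤ | z ∈ X ∧ ∀ y ∈ X,
            V y - dotp (fun k => p k + if k = i then lam else 0) y
              ≤ V z - dotp (fun k => p k + if k = i then lam else 0) z} = {x'} →
        ∀ k, k ≠ i → x k ≤ x' k) :
    ∀ (p : I → ℝ) (x x' : I → ℤ), x ≠ x' →
      {z : I → ℤ | z ∈ X ∧ ∀ y ∈ X, V y - dotp p y ≤ V z - dotp p z}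
        = ({x, x'} : Set (I → ℤ)) →
      (∀ i j : I, 0 < x' i - x i → 0 < x' j - x j → i = j) ∧
      (∀ i j : I, x' i - x i < 0 → x' j - x j < 0 → i = j) := by
  intro p x x' _hne hset
  have hset' : {z : I → ℤ | z ∈ X ∧ ∀ y ∈ X, V y - dotp p y ≤ V z - dotp p z}
      = ({x', x} : Set (I → ℤ)) := by rw [hset, Set.pair_comm]
  constructor
  · intro i j hi hj
    exact key_neg X hX01 V hsub p x' x hset' i j (by omega) (by omega)
  · exact key_neg X hX01 V hsub p x x' hset
end

section
/- Let each agent j ∈ J (J finite) have finite feasible set X^j ⊆ ℤ^I, money lower bound m₀^j, and continuous utility u^j strictly increasing in money with the standard limit conditions, and let s^j(x,v) be the compensation function. Fix a utility profile (v^j)_{j∈J} and an allocation (x^j)_{j∈J} with Σ_j x^j = y that minimizes Σ_j s^j(x^j, v^j) over all allocations of the total endowment y. Then, setting m^j = s^j(x^j, v^j), the allocation ((m^j, x^j))_{j∈J} is Pareto-efficient: there is no allocation ((m̂^j, x̂^j))_{j∈J} of feasible consumption bundles with Σ_j (m̂^j, x̂^j) = Σ_j (m^j, x^j) giving every agent weakly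 higher utility and some agent strictly higher utility. -/
open Filter Set

/-- Claim 1: if an allocation of goods minimizes the total money
`Σ_j s^j(x^j,v^j)` needed to reach the utility profile `(v^j)` over all allocations
of the total endowment `y`, then, giving agent `j` money `m^j = s^j(x^j,v^j)`, the
resulting allocation of consumption bundles is Pareto-efficient. -/
theorem expenditure_minimizing_allocation_pareto_efficient
    {I J : Type*} [Fintype I] [Fintype J]
    (X : J → Finset (I → ℤ)) (m₀ : J → ℝ) (u : J → ℝ → (I → ℤ) → ℝ)
    (hcont : ∀ j, ∀ x ∈ X j, ContinuousOn (fun m => u j m x) (Set.Ioi (m₀ j)))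
    (hmono : ∀ j, ∀ x ∈ X j, StrictMonoOn (fun m => u j m x) (Set.Ioi (m₀ j)))
    (s : J → (I → ℤ) → ℝ → ℝ)
    (hs : ∀ j, ∀ x ∈ X j, ∀ v : ℝ, s j x v > m₀ j ∧ u j (s j x v) x = v)
    (v : J → ℝ) (y : I → ℤ) (x : J → I → ℤ)
    (hxX : ∀ j, x j ∈ X j) (hxsum : ∑ j, x j = y)
    (hmin : ∀ z : J → I → ℤ, (∀ j, z j ∈ X j) → (∑ j, z j = y) →
        ∑ j, s j (x j) (v j) ≤ ∑ j, s j (z j) (v j)) :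
    ¬ ∃ (mhat : J → ℝ) (xhat : J → I → ℤ),
        (∀ j, xhat j ∈ X j) ∧ (∀ j, mhat j > m₀ j) ∧
        (∑ j, mhat j = ∑ j, s j (x j) (v j)) ∧ (∑ j, xhat j = y) ∧
        (∀ j, u j (s j (x j) (v j)) (x j) ≤ u j (mhat j) (xhat j)) ∧
        (∃ j, u j (s j (x j) (v j)) (x j) < u j (mhat j) (xhat j)) := by
  rintro ⟨mhat, xhat, hXhat, hmhat, hmsum, hxhatsum, hweak, j₀, hstrict⟩
  -- key : for each j, mhat j ≥ s j (xhat j) (v j)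
  have hval : ∀ j, u j (s j (x j) (v j)) (x j) = v j := fun j => (hs j _ (hxX j) (v j)).2
  have key : ∀ j, s j (xhat j) (v j) ≤ mhat j := by
    intro j
    by_contra h
    push_neg at h
    have h1 := (hmono j _ (hXhat j)) (mem_Ioi.2 (hmhat j))
      (mem_Ioi.2 (hs j _ (hXhat j) (v j)).1) h
    simp only at h1
    rw [(hs j _ (hXhat j) (v j)).2] at h1
    have h2 := lt_of_le_of_lt (hweak j) h1
    rw [hval j] at h2
    exact lt_irrefl _ h2
  have keyst : s j₀ (xhat j₀) (v j₀) < mhat j₀ := by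
    rcases lt_or_eq_of_le (key j₀) with h | h
    · exact h
    · exfalso
      rw [hval j₀, ← (hs j₀ _ (hXhat j₀) (v j₀)).2, h] at hstrict
      exact lt_irrefl _ hstrict
  have hsum : ∑ j, s j (xhat j) (v j) < ∑ j, mhat j :=
    Finset.sum_lt_sum (fun j _ => key j) ⟨j₀, Finset.mem_univ _, keyst⟩
  have := hmin xhat hXhat hxhatsum
  rw [hmsum] at hsum
  exact absurd (le_trans this hsum.le) (lt_irrefl _ (lt_of_le_of_lt this hsum)).elim
end
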